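/- The ruler sequence is squarefree in the combinatorial sense: for all positive integers i and L, there exists j with 0 ≤ j < L such that a(i + j) ≠ a(i + L + j); i.e., the sequence contains no two identical consecutive blocks. -/

import Mathlib

def ruler (n : ℕ) : ℕ := padicValNat 2 (2 * n)

theorem ruler_squarefree (i L : ℕ) (hi : 0 < i) (hL : 0 < L) :
    ∃ j : ℕ, j < L ∧ ruler (i + j) ≠ ruler (i + L + j) := by
  by_contra h
  push_neg at h
  have hv : ∀ j < L, padicValNat 2 (i + j) = padicValNat 2 (i + L + j) := by
    intro j hj
    have hh := h j hj
    unfold ruler at hh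
    rw [padicValNat.mul two_ne_zero (by omega), padicValNat.mul two_ne_zero (by omega)] at hh
    omega
  obtain ⟨j0, hj0, hmax⟩ := (Finset.range L).exists_max_image
    (fun j => padicValNat 2 (i + j)) ⟨0, Finset.mem_range.mpr hL⟩
  rw [Finset.mem_range] at hj0
  have hmax' : ∀ j < L, padicValNat 2 (i + j) ≤ padicValNat 2 (i + j0) :=
    fun j hj => hmax j (Finset.mem_range.mpr hj)
  set m := padicValNat 2 (i + j0) with hm
  have ha : 2 ^ m ∣ i + j0 := pow_padicValNat_dvd
  have ha' : ¬ 2 ^ (m + 1) ∣ i + j0 := pow_succ_padicValNat_not_dvd (by omega)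
  have hb : padicValNat 2 (i + L + j0) = m := (hv j0 hj0).symm
  have hbd : 2 ^ m ∣ i + L + j0 := by rw [← hb]; exact pow_padicValNat_dvd
  have hbd' : ¬ 2 ^ (m + 1) ∣ i + L + j0 := by
    have := pow_succ_padicValNat_not_dvd (p := 2) (n := i + L + j0) (by omega)
    rwa [hb] at this
  have hdvdL : 2 ^ (m + 1) ∣ L := by
    obtain ⟨u, hu⟩ := ha
    obtain ⟨u', hu'⟩ := hbd
    have hou : Odd u := by
      rcases Nat.even_or_odd u with ⟨t, ht⟩ | ho
      · exact absurd ⟨t, by rw [hu, ht]; ring⟩ ha'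
      · exact ho
    have hou' : Odd u' := by
      rcases Nat.even_or_odd u' with ⟨t, ht⟩ | ho
      · exact absurd ⟨t, by rw [hu', ht]; ring⟩ hbd'
      · exact ho
    have hpos : 0 < 2 ^ m := Nat.pow_pos (by norm_num)
    have huu : u ≤ u' := by
      by_contra hc
      push_neg at hc
      have : 2 ^ m * u' < 2 ^ m * u := (Nat.mul_lt_mul_left hpos).mpr hc
      omega
    obtain ⟨t, ht⟩ := Nat.Odd.sub_odd hou' hou
    have hu'' : u' = u + 2 * t := by omega
    refine ⟨t, ?_⟩
    have : 2 ^ m * (u + 2 * t) = 2 ^ m * u + 2 ^ (m + 1) * t := by ring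
    rw [hu''] at hu'
    omega
  have hle : 2 ^ (m + 1) ≤ L := Nat.le_of_dvd hL hdvdL
  set d := 2 ^ (m + 1) with hd
  have hdpos : 0 < d := Nat.pow_pos (by norm_num)
  by_cases hid : d ∣ i
  · have : m + 1 ≤ padicValNat 2 (i + 0) := by
      rw [← padicValNat_dvd_iff_le (by omega)]
      simpa using hid
    have := hmax' 0 hL
    omega
  · set j := (i / d + 1) * d - i with hj
    have h1 : d * (i / d) + i % d = i := Nat.div_add_mod i d
    have h2 : i % d < d := Nat.mod_lt i hdpos
    have h2' : i % d ≠ 0 := fun hc => hid (Nat.dvd_of_mod_eq_zero hc)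
    have h3 : (i / d + 1) * d = d * (i / d) + d := by ring
    have hjd : j < d := by omega
    have hij : i + j = d * (i / d) + d := by omega
    have hdvd : d ∣ i + j := by rw [hij]; exact ⟨i / d + 1, by ring⟩
    have hge : m + 1 ≤ padicValNat 2 (i + j) := by
      rw [← padicValNat_dvd_iff_le (by omega)]
      exact hdvd
    have := hmax' j (by omega)
    omega
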